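/- Let c_1, …, c_{p} be nonnegative reals and let h_p(x) = x^p/p! - Σ_{k=1}^{p} (c_k/(p-k)!) x^{p-k}. Let r_p be the largest nonnegative real root of h_p. Then h_p(x) = (x - r_p) g_p(x) where g_p is a real polynomial all of whose coefficients are nonnegative. -/

import Mathlib

open Polynomial

theorem stmt1 (p : ℕ) (hp : 1 ≤ p) (c : ℕ → ℝ)
    (hc : ∀ k, 1 ≤ k → k ≤ p → 0 ≤ c k)
    (h : Polynomial ℝ)
    (hh : h = C (1 / (Nat.factorial p : ℝ)) * X ^ p -
      ∑ k ∈ Finset.Icc 1 p, C (c k / (Nat.factorial (p - k) : ℝ)) * X ^ (p - k))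
    (r : ℝ) (hr0 : 0 ≤ r) (hroot : h.eval r = 0)
    (hrmax : ∀ x : ℝ, 0 ≤ x → h.eval x = 0 → x ≤ r) :
    ∃ g : Polynomial ℝ, (∀ i, 0 ≤ g.coeff i) ∧ h = (X - C r) * g := by
  have hfp : (0:ℝ) < (Nat.factorial p : ℝ) := by
    exact_mod_cast Nat.factorial_pos p
  -- coefficients of h
  have ha : ∀ n, h.coeff n =
      (if n = p then (1:ℝ)/(Nat.factorial p : ℝ) else 0) -
      (if n < p then c (p-n) / (Nat.factorial n : ℝ) else 0) := by
    intro n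
    rw [hh]
    simp only [coeff_sub, coeff_C_mul, coeff_X_pow, finset_sum_coeff]
    congr 1
    · split_ifs <;> simp
    · by_cases hn : n < p
      · rw [if_pos hn, Finset.sum_eq_single (p - n)]
        · rw [if_pos (by omega : n = p - (p-n))]
          have : p - (p - n) = n := by omega
          rw [this]; ring
        · intro b hb hbne
          simp only [Finset.mem_Icc] at hb
          rw [if_neg (by omega), mul_zero]
        · intro hmem
          simp only [Finset.mem_Icc] at hmem
          omega
      · rw [if_neg hn]
        apply Finset.sum_eq_zero
        intro k hk
        simp only [Finset.mem_Icc] at hk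
        rw [if_neg (by omega), mul_zero]
  have hap : h.coeff p = 1 / (Nat.factorial p : ℝ) := by
    rw [ha p]; simp
  have hneg : ∀ j, j < p → h.coeff j ≤ 0 := by
    intro j hj
    rw [ha j, if_neg (by omega), if_pos hj, zero_sub, neg_nonpos]
    apply div_nonneg (hc (p - j) (by omega) (by omega))
    exact_mod_cast (Nat.factorial_pos j).le
  have hzero : ∀ j, p < j → h.coeff j = 0 := by
    intro j hj
    rw [ha j, if_neg (by omega), if_neg (by omega), sub_zero]
  have hdeglt : h.natDegree < p + 1 := by
    have : h.natDegree ≤ p := natDegree_le_iff_coeff_eq_zero.mpr fun m hm => hzero m hm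
    omega
  -- the quotient polynomial
  set g : Polynomial ℝ := ∑ k ∈ Finset.range (p+1), C (h.coeff k) *
        ∑ i ∈ Finset.range k, X^i * (C r)^(k-1-i) with hgdef
  have hfac : h = (X - C r) * g := by
    have h1 : (X - C r) * g
        = ∑ k ∈ Finset.range (p+1), C (h.coeff k) * (X^k - (C r)^k) := by
      rw [hgdef, Finset.mul_sum]
      refine Finset.sum_congr rfl fun k _ => ?_
      rw [mul_comm (X - C r), mul_assoc, geom_sum₂_mul]
    rw [h1]
    have h2 : ∑ k ∈ Finset.range (p+1), C (h.coeff k) * (X^k - (C r)^k)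
        = (∑ k ∈ Finset.range (p+1), C (h.coeff k) * X^k)
          - C (∑ k ∈ Finset.range (p+1), h.coeff k * r^k) := by
      rw [map_sum, ← Finset.sum_sub_distrib]
      refine Finset.sum_congr rfl fun k _ => ?_
      rw [C_mul, C_pow]; ring
    rw [h2, ← eval_eq_sum_range' hdeglt, hroot, map_zero, sub_zero]
    conv_lhs => rw [h.as_sum_range' (p+1) hdeglt]
    exact Finset.sum_congr rfl fun k _ => (C_mul_X_pow_eq_monomial).symm
  have hgco : ∀ j, g.coeff j = ∑ k ∈ Finset.Icc (j+1) p, h.coeff k * r^(k-1-j) := by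
    intro j
    rw [hgdef, finset_sum_coeff]
    have key : ∀ k, (C (h.coeff k) * ∑ i ∈ Finset.range k, X^i * (C r)^(k-1-i)).coeff j
        = if j < k then h.coeff k * r^(k-1-j) else 0 := by
      intro k
      rw [coeff_C_mul, finset_sum_coeff]
      have h3 : ∀ i, (X^i * (C r)^(k-1-i)).coeff j = if j = i then r^(k-1-i) else 0 := by
        intro i
        rw [← C_pow, mul_comm, coeff_C_mul, coeff_X_pow]
        split_ifs <;> ring
      simp only [h3, Finset.sum_ite_eq, Finset.mem_range]
      split_ifs <;> ring
    simp only [key]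
    rw [Finset.sum_ite, Finset.sum_const_zero, add_zero]
    apply Finset.sum_congr
    · ext k; simp only [Finset.mem_filter, Finset.mem_range, Finset.mem_Icc]; omega
    · intros; rfl
  refine ⟨g, ?_, hfac⟩
  rcases eq_or_lt_of_le hr0 with hr | hr
  · -- r = 0 : all lower coefficients must vanish
    have hall : ∀ j, j < p → h.coeff j = 0 := by
      by_contra hx
      push_neg at hx
      obtain ⟨K, hK, hKne⟩ := hx
      have hKneg : h.coeff K < 0 := lt_of_le_of_ne (hneg K hK) hKne
      -- h.eval t ≤ t^p/p! + a_K t^K for t ≥ 0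
      have hbound : ∀ t : ℝ, 0 ≤ t →
          h.eval t ≤ t^p / (Nat.factorial p : ℝ) + h.coeff K * t^K := by
        intro t ht
        rw [eval_eq_sum_range' hdeglt]
        have hpm : p ∈ Finset.range (p+1) := by simp
        rw [← Finset.add_sum_erase _ _ hpm]
        have hKm : K ∈ (Finset.range (p+1)).erase p := by
          simp only [Finset.mem_erase, Finset.mem_range]; omega
        rw [← Finset.add_sum_erase _ _ hKm, hap]
        have : ∑ k ∈ ((Finset.range (p+1)).erase p).erase K, h.coeff k * t^k ≤ 0 := by
          apply Finset.sum_nonpos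
          intro k hk
          simp only [Finset.mem_erase, Finset.mem_range] at hk
          exact mul_nonpos_of_nonpos_of_nonneg (hneg k (by omega)) (pow_nonneg ht k)
        have e : (1:ℝ)/(Nat.factorial p : ℝ) * t^p = t^p/(Nat.factorial p : ℝ) := by ring
        linarith
      -- pick a small positive t with h.eval t < 0
      set t : ℝ := min (1:ℝ) ((-h.coeff K) * (Nat.factorial p : ℝ) / 2) with htdef
      have ht0 : 0 < t := by
        apply lt_min one_pos
        have : 0 < -h.coeff K := by linarith
        positivity
      have ht1 : t ≤ 1 := min_le_left _ _
      have ht2 : t / (Nat.factorial p : ℝ) + h.coeff K < 0 := by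
        have h1 : t ≤ (-h.coeff K) * (Nat.factorial p : ℝ) / 2 := min_le_right _ _
        rw [div_add' _ _ _ (ne_of_gt hfp)]
        apply div_neg_of_neg_of_pos _ hfp
        nlinarith
      have htneg : h.eval t < 0 := by
        have hb := hbound t ht0.le
        have hpow : t^p ≤ t^K * t := by
          calc t^p ≤ t^(K+1) := pow_le_pow_of_le_one ht0.le ht1 (by omega)
          _ = t^K * t := by ring
        have htK : 0 < t^K := pow_pos ht0 K
        calc h.eval t ≤ t^p / (Nat.factorial p : ℝ) + h.coeff K * t^K := hb
          _ ≤ (t^K * t) / (Nat.factorial p : ℝ) + h.coeff K * t^K := by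
              gcongr
          _ = t^K * (t / (Nat.factorial p : ℝ) + h.coeff K) := by ring
          _ < 0 := mul_neg_of_pos_of_neg htK ht2
      -- h tends to infinity
      have hndeg : h.natDegree = p := by
        have h1 : p ≤ h.natDegree := le_natDegree_of_ne_zero (by rw [hap]; positivity)
        omega
      have hne : h ≠ 0 := fun hcon => by
        rw [hcon] at hap; simp at hap
        exact absurd hap.symm (by positivity)
      have hlead : 0 ≤ h.leadingCoeff := by
        rw [leadingCoeff, hndeg, hap]; positivity
      have hdpos : 0 < h.degree := by
        rw [degree_eq_natDegree hne, hndeg]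
        exact_mod_cast (by omega : 0 < p)
      have htend := h.tendsto_atTop_of_leadingCoeff_nonneg hdpos hlead
      obtain ⟨M, hM1, hM2⟩ :=
        ((htend.eventually_ge_atTop 1).and (Filter.eventually_ge_atTop t)).exists
      -- IVT
      have hIVT := intermediate_value_Icc hM2 (h.continuous.continuousOn (s := Set.Icc t M))
      have h0mem : (0:ℝ) ∈ Set.Icc (h.eval t) (h.eval M) :=
        ⟨htneg.le, le_trans zero_le_one hM1⟩
      obtain ⟨x, hx1, hx2⟩ := hIVT h0mem
      have hxr : x ≤ r := hrmax x (le_trans ht0.le hx1.1) hx2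
      have : 0 < x := lt_of_lt_of_le ht0 hx1.1
      rw [← hr] at hxr
      linarith
    -- now all coefficients of h up to p are nonneg
    intro j
    rw [hgco j]
    apply Finset.sum_nonneg
    intro k hk
    simp only [Finset.mem_Icc] at hk
    apply mul_nonneg _ (pow_nonneg hr0 _)
    rcases lt_or_eq_of_le hk.2 with hkp | hkp
    · rw [hall k hkp]
    · rw [hkp, hap]; positivity
  · -- r > 0
    intro j
    by_cases hjp : j < p
    · have hsplit : (∑ k ∈ Finset.range (j+1), h.coeff k * r^k)
          + ∑ k ∈ Finset.Icc (j+1) p, h.coeff k * r^k = 0 := by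
        have : Finset.Icc (j+1) p = Finset.Ico (j+1) (p+1) := by
          rw [Finset.Ico_add_one_right_eq_Icc]
        rw [this, Finset.range_eq_Ico,
          Finset.sum_Ico_consecutive _ (by omega : 0 ≤ j+1) (by omega : j+1 ≤ p+1),
          ← Finset.range_eq_Ico, ← eval_eq_sum_range' hdeglt, hroot]
      have hkey : g.coeff j * r^(j+1) = ∑ k ∈ Finset.Icc (j+1) p, h.coeff k * r^k := by
        rw [hgco j, Finset.sum_mul]
        refine Finset.sum_congr rfl fun k hk => ?_
        simp only [Finset.mem_Icc] at hk
        rw [mul_assoc, ← pow_add]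
        congr 2
        omega
      have hnn : 0 ≤ g.coeff j * r^(j+1) := by
        rw [hkey]
        have : ∑ k ∈ Finset.Icc (j+1) p, h.coeff k * r^k
            = - ∑ k ∈ Finset.range (j+1), h.coeff k * r^k := by linarith
        rw [this, neg_nonneg]
        apply Finset.sum_nonpos
        intro k hk
        simp only [Finset.mem_range] at hk
        exact mul_nonpos_of_nonpos_of_nonneg (hneg k (by omega)) (pow_nonneg hr0 k)
      exact (mul_nonneg_iff_of_pos_right (pow_pos hr (j+1))).mp hnn
    · rw [hgco j, Finset.Icc_eq_empty (by omega), Finset.sum_empty]
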